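/- Let k be an even natural number with k ≥ 2 and let ζ = (1 + i/k)². Then Re(ζᵏ) < 0 and 0 < Im(ζᵏ). -/

import Mathlib

set_option maxHeartbeats 800000

/-- Estermann's Lemma: for `k` even, `k ≥ 2`, and `ζ = (1 + i/k)²`,
we have `Re(ζᵏ) < 0 < Im(ζᵏ)`. -/
theorem estermann_lemma (k : ℕ) (hk : Even k) (hk2 : 2 ≤ k) :
    ((((1 : ℂ) + Complex.I / (k : ℂ)) ^ 2) ^ k).re < 0 ∧
      0 < ((((1 : ℂ) + Complex.I / (k : ℂ)) ^ 2) ^ k).im := by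
  have hkR : (2 : ℝ) ≤ (k : ℝ) := by exact_mod_cast hk2
  have hkpos : (0 : ℝ) < (k : ℝ) := by linarith
  set x : ℝ := 1 / (k : ℝ) with hxdef
  have hx0 : 0 < x := by positivity
  have hx2 : x ≤ 1 / 2 := by
    rw [hxdef, div_le_div_iff₀ hkpos (by norm_num)]; linarith
  set r : ℝ := Real.sqrt (1 + x ^ 2) with hrdef
  have hr1 : (1 : ℝ) ≤ r := by
    rw [hrdef]
    nlinarith [Real.sq_sqrt (by positivity : (0:ℝ) ≤ 1 + x ^ 2),
      Real.sqrt_nonneg (1 + x ^ 2)]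
  have hr0 : 0 < r := lt_of_lt_of_le one_pos hr1
  set θ : ℝ := Real.arctan x with hθdef
  have hθ0 : 0 < θ := by
    have := Real.arctan_strictMono hx0
    rw [Real.arctan_zero] at this; exact this
  have hθhalf : θ < Real.pi / 2 := Real.arctan_lt_pi_div_two x
  have hθx : θ < x := by
    have := Real.lt_tan hθ0 hθhalf
    rwa [hθdef, Real.tan_arctan] at this
  have hsinθ : Real.sin θ = x / r := Real.sin_arctan x
  have hcosθ : Real.cos θ = 1 / r := Real.cos_arctan x
  have hsinlt : Real.sin θ < θ := Real.sin_lt hθ0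
  -- polar form
  have hpolar : (1 : ℂ) + Complex.I / (k : ℂ) =
      (r : ℂ) * Complex.exp ((θ : ℂ) * Complex.I) := by
    rw [Complex.exp_mul_I, ← Complex.ofReal_cos, ← Complex.ofReal_sin,
      hsinθ, hcosθ]
    have hIk : Complex.I / (k : ℂ) = (x : ℂ) * Complex.I := by
      rw [hxdef]; push_cast; ring
    rw [hIk]
    have hrne : (r : ℂ) ≠ 0 := by exact_mod_cast hr0.ne'
    push_cast; field_simp
  set φ : ℝ := 2 * (k : ℝ) * θ with hφdef
  have hkey : ((((1 : ℂ) + Complex.I / (k : ℂ)) ^ 2) ^ k) =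
      ((r ^ (2 * k) : ℝ) : ℂ) * Complex.exp ((φ : ℂ) * Complex.I) := by
    have harg : ((2 * k : ℕ) : ℂ) * ((θ : ℂ) * Complex.I) = ((φ : ℝ) : ℂ) * Complex.I := by
      rw [hφdef]; push_cast; ring
    rw [hpolar, ← pow_mul, mul_pow, ← Complex.exp_nat_mul, harg, Complex.ofReal_pow]
  have hre : ((((1 : ℂ) + Complex.I / (k : ℂ)) ^ 2) ^ k).re
      = r ^ (2 * k) * Real.cos φ := by
    rw [hkey, Complex.exp_mul_I]
    simp [Complex.cos_ofReal_re, Complex.sin_ofReal_re, Complex.cos_ofReal_im,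
      Complex.sin_ofReal_im, Complex.mul_re, Complex.mul_im, ← Complex.ofReal_pow]
  have him : ((((1 : ℂ) + Complex.I / (k : ℂ)) ^ 2) ^ k).im
      = r ^ (2 * k) * Real.sin φ := by
    rw [hkey, Complex.exp_mul_I]
    simp [Complex.cos_ofReal_re, Complex.sin_ofReal_re, Complex.cos_ofReal_im,
      Complex.sin_ofReal_im, Complex.mul_re, Complex.mul_im, ← Complex.ofReal_pow]
  -- bounds on φ
  have hπ : Real.pi < 3.15 := Real.pi_lt_d2
  have hπ3 : 3 < Real.pi := Real.pi_gt_three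
  have hx4 : 2 * (k : ℝ) * x = 2 := by
    rw [hxdef]; field_simp
  have hφup : φ < Real.pi := by
    have h1 : φ < 2 * (k : ℝ) * x := by
      rw [hφdef]; nlinarith
    linarith [hx4 ▸ h1]
  have hrsq : r ^ 2 = 1 + x ^ 2 := Real.sq_sqrt (by positivity)
  have h54 : r ^ 2 ≤ 5 / 4 := by rw [hrsq]; nlinarith
  have hrlt : r * Real.pi < 4 := by
    have hsq : (r * Real.pi) ^ 2 ≤ (5 / 4) * Real.pi ^ 2 := by
      nlinarith [Real.pi_pos, sq_nonneg Real.pi]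
    nlinarith [mul_pos hr0 Real.pi_pos]
  have hφlow : Real.pi / 2 < φ := by
    have h1 : 2 * (k : ℝ) * Real.sin θ < φ := by
      rw [hφdef]; nlinarith
    have h2 : 2 * (k : ℝ) * Real.sin θ = 2 / r := by
      rw [hsinθ, hxdef]; field_simp
    have h3 : Real.pi / 2 < 2 / r := by
      rw [div_lt_div_iff₀ (by norm_num) hr0]
      nlinarith
    linarith [h2 ▸ h1]
  have hpow : 0 < r ^ (2 * k) := pow_pos hr0 _
  constructor
  · rw [hre]
    have hcos : Real.cos φ < 0 :=
      Real.cos_neg_of_pi_div_two_lt_of_lt hφlow (by linarith)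
    exact mul_neg_of_pos_of_neg hpow hcos
  · rw [him]
    have hsin : 0 < Real.sin φ :=
      Real.sin_pos_of_pos_of_lt_pi (by linarith [Real.pi_pos]) hφup
    exact mul_pos hpow hsin
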